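/- arXiv:2512.19224 — 2 statements merged into one kernel-verified Lean document; each statement's English description precedes it below -/
import Mathlib

section
/- Let E be a real inner product space (e.g. Euclidean space ℝⁿ), let M > 1 be a real constant, and let f : E → ℝ be a nonnegative function, convex on E, satisfying the Δ₂-condition f(2ξ) ≤ M·f(ξ) for all ξ ∈ E. Then at every point ξ ∈ E at which f is differentiable, with gradient ∇f(ξ) (the vector representing the Fréchet derivative via the inner product), one has ⟪∇f(ξ), ξ⟫ ≤ (M − 1)·f(ξ). -/
open scoped RealInnerProductSpace

/-- If `f : E → ℝ` is nonnegative, convex, and satisfies the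
`Δ₂`-condition `f (2 • ξ) ≤ M * f ξ` with `M > 1`, then at every point `ξ` of
differentiability, the gradient `g` (the vector representing the Fréchet
derivative via the inner product) satisfies `⟪g, ξ⟫ ≤ (M - 1) * f ξ`. -/
theorem gradient_pairing_le_of_delta_two
    {E : Type*} [NormedAddCommGroup E] [InnerProductSpace ℝ E]
    (M : ℝ) (hM : 1 < M)
    (f : E → ℝ) (hf_nonneg : ∀ ξ : E, 0 ≤ f ξ)
    (hf_convex : ConvexOn ℝ Set.univ f)
    (hΔ₂ : ∀ ξ : E, f ((2 : ℝ) • ξ) ≤ M * f ξ)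
    (ξ : E) (f' : E →L[ℝ] ℝ) (hf' : HasFDerivAt f f' ξ)
    (g : E) (hg : ∀ v : E, ⟪g, v⟫ = f' v) :
    ⟪g, ξ⟫ ≤ (M - 1) * f ξ := by
  set φ : ℝ → ℝ := fun t => f (t • ξ) with hφ
  have hlin : IsLinearMap ℝ (fun t : ℝ => t • ξ) :=
    ⟨fun a b => add_smul a b ξ, fun c a => smul_smul c a ξ ▸ (smul_assoc c a ξ)⟩
  have hconv : ConvexOn ℝ Set.univ φ := by
    have := hf_convex.comp_affineMap (hlin.mk' _).toAffineMap
    exact this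
  have hd : HasDerivAt (fun t : ℝ => t • ξ) ξ 1 := by
    simpa using (hasDerivAt_id (1 : ℝ)).smul_const ξ
  have hf'' : HasFDerivAt f f' ((1:ℝ) • ξ) := by rw [one_smul]; exact hf'
  have hφd : HasDerivAt φ (f' ξ) 1 := by
    exact hf''.comp_hasDerivAt 1 hd
  have hslope := hconv.le_slope_of_hasDerivAt (Set.mem_univ (1 : ℝ))
    (Set.mem_univ (2 : ℝ)) one_lt_two hφd
  have : f' ξ ≤ f ((2 : ℝ) • ξ) - f ξ := by
    have := hslope
    rw [slope_def_field] at this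
    norm_num at this; simpa [φ] using this
  have h2 : f' ξ ≤ (M - 1) * f ξ := by
    have := hΔ₂ ξ
    nlinarith [hf_nonneg ξ]
  rw [hg ξ]; exact h2
end

section
/- Let E be a real inner product space (e.g. Euclidean space ℝⁿ), let M ≥ m > 1 be real constants, and let f : E → ℝ be a nonnegative function, convex on E, satisfying the two-sided Δ₂-condition m·f(ξ) ≤ f(2ξ) ≤ M·f(ξ) for all ξ ∈ E. Then at every point ξ ∈ E at which f is differentiable, with gradient ∇f(ξ), one has 2·(1 − 1/m)·f(ξ) ≤ ⟪∇f(ξ), ξ⟫ ≤ (M − 1)·f(ξ). -/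
open scoped RealInnerProductSpace

lemma support_line_aux {E : Type*} [NormedAddCommGroup E] [InnerProductSpace ℝ E]
    {f : E → ℝ} (hf_convex : ConvexOn ℝ Set.univ f)
    {ξ : E} {f' : E →L[ℝ] ℝ} (hf' : HasFDerivAt f f' ξ) (y : E) :
    f ξ + f' (y - ξ) ≤ f y := by
  set c : ℝ → E := fun t => ξ + t • (y - ξ) with hc
  have hcd : HasDerivAt c (y - ξ) 0 := by
    have h := ((hasDerivAt_id (0:ℝ)).smul_const (y - ξ)).const_add ξ
    rw [one_smul] at h
    exact h
  have hc0 : c 0 = ξ := by simp [hc]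
  have hφd : HasDerivAt (f ∘ c) (f' (y - ξ)) 0 := by
    rw [← hc0] at hf'
    simpa using hf'.comp_hasDerivAt 0 hcd
  have hφc : ConvexOn ℝ Set.univ (f ∘ c) := by
    have := hf_convex.comp_affineMap (AffineMap.lineMap ξ y)
    have heq : (f ∘ c) = (f ∘ ⇑(AffineMap.lineMap ξ y)) := by
      funext t; simp [hc, AffineMap.lineMap_apply]
      congr 1; module
    rw [heq]; simpa using this
  have := hφc.le_slope_of_hasDerivAt (Set.mem_univ 0) (Set.mem_univ 1) one_pos hφd
  rw [slope_def_field] at this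
  simp only [hc, Function.comp] at this
  simp only [one_smul, zero_smul, add_zero] at this
  have h2 : f' (y - ξ) ≤ f (ξ + (y - ξ)) - f ξ := by
    simpa [div_one] using this
  rw [add_sub_cancel] at h2; linarith

/-- If `f : E → ℝ` is nonnegative, convex, and satisfies the
two-sided `Δ₂`-condition `m * f ξ ≤ f (2 • ξ) ≤ M * f ξ` with `M ≥ m > 1`,
then at every point `ξ` of differentiability, the gradient `g` satisfies
`2 * (1 - 1/m) * f ξ ≤ ⟪g, ξ⟫ ≤ (M - 1) * f ξ`. -/
theorem gradient_pairing_bounds_of_two_sided_delta_two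
    {E : Type*} [NormedAddCommGroup E] [InnerProductSpace ℝ E]
    (m M : ℝ) (hm : 1 < m) (hmM : m ≤ M)
    (f : E → ℝ) (hf_nonneg : ∀ ξ : E, 0 ≤ f ξ)
    (hf_convex : ConvexOn ℝ Set.univ f)
    (hΔ₂ : ∀ ξ : E, m * f ξ ≤ f ((2 : ℝ) • ξ) ∧ f ((2 : ℝ) • ξ) ≤ M * f ξ)
    (ξ : E) (f' : E →L[ℝ] ℝ) (hf' : HasFDerivAt f f' ξ)
    (g : E) (hg : ∀ v : E, ⟪g, v⟫ = f' v) :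
    2 * (1 - 1 / m) * f ξ ≤ ⟪g, ξ⟫ ∧ ⟪g, ξ⟫ ≤ (M - 1) * f ξ := by
  have hm0 : (0:ℝ) < m := lt_trans one_pos hm
  rw [hg ξ]
  constructor
  · -- lower bound: use y = (1/2) • ξ
    have h1 := support_line_aux hf_convex hf' ((2:ℝ)⁻¹ • ξ)
    have hd : ((2:ℝ)⁻¹ • ξ - ξ) = (-(2:ℝ)⁻¹) • ξ := by module
    rw [hd, map_smul] at h1
    have h2 : m * f ((2:ℝ)⁻¹ • ξ) ≤ f ξ := by
      have := (hΔ₂ ((2:ℝ)⁻¹ • ξ)).1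
      have he : (2:ℝ) • (2:ℝ)⁻¹ • ξ = ξ := by module
      rwa [he] at this
    have h3 : f ((2:ℝ)⁻¹ • ξ) ≤ f ξ / m := (le_div_iff₀' hm0).mpr h2
    have : f ξ + (-(2:ℝ)⁻¹) * f' ξ ≤ f ξ / m := le_trans h1 h3
    have hrw : 2 * (1 - 1 / m) * f ξ = 2 * (f ξ - f ξ / m) := by
      field_simp
    rw [hrw]
    linarith
  · -- upper bound: use y = 2 • ξ
    have h1 := support_line_aux hf_convex hf' ((2:ℝ) • ξ)
    have hd : ((2:ℝ) • ξ - ξ) = ξ := by module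
    rw [hd] at h1
    have h2 := (hΔ₂ ξ).2
    linarith
end
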